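/- Let m be a positive integer and n a nonzero integer, and let x, y be real numbers with |x| ≤ 2 and φ(x,y) = 0, where φ(x,y) = S_{n-1}(λ)·α - S_{n-2}(λ) with λ = x^2 - y - (y-2)(y+2-x^2)·S_m(y)·S_{m-1}(y) and α = 1 + (y+2-x^2)·S_{m-1}(y)·(S_m(y) - S_{m-1}(y)). If |x| > 2·√(1 - 1/(2n^2 + 2|n|·√(4m(m+1)+n^2))), then y > 2. -/

import Mathlib

open Real

/-- Auxiliary sequence for the Chebyshev-like polynomials on natural indices. -/
def Saux {R : Type*} [CommRing R] : ℕ → R → R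
  | 0, _ => 1
  | 1, z => z
  | (n + 2), z => z * Saux (n + 1) z - Saux n z

/-- The Chebyshev-like polynomials `S j` indexed by all integers `j`:
`S 0 z = 1`, `S 1 z = z`, and `S (j + 1) z = z * S j z - S (j - 1) z` for all `j : ℤ`
(so `S (-1) z = 0`, `S (-2) z = -1`, and in general `S (-j) z = -S (j - 2) z`). -/
def S {R : Type*} [CommRing R] (j : ℤ) (z : R) : R :=
  if 0 ≤ j then Saux j.toNat z
  else if j = -1 then 0
  else -Saux (-j - 2).toNat z

lemma Saux_add_two (k : ℕ) (z : ℝ) : Saux (k+2) z = z * Saux (k+1) z - Saux k z := rfl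

lemma saux_identity (k : ℕ) (z : ℝ) :
    Saux (k+1) z ^ 2 + Saux k z ^ 2 - z * Saux (k+1) z * Saux k z = 1 := by
  induction k with
  | zero => show z^2 + (1:ℝ)^2 - z * z * 1 = 1; ring
  | succ k ih =>
      have e : k + 1 + 1 = k + 2 := rfl
      rw [e, Saux_add_two]
      linear_combination ih

lemma saux_cos (θ : ℝ) (k : ℕ) :
    Saux k (2*Real.cos θ) * Real.sin θ = Real.sin ((k+1)*θ) := by
  induction k using Nat.twoStepInduction with
  | zero => simp [Saux]
  | one =>
      show (2*Real.cos θ) * Real.sin θ = Real.sin (((1:ℕ)+1)*θ)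
      push_cast
      rw [show ((1:ℝ)+1)*θ = 2*θ by ring, Real.sin_two_mul]
      ring
  | more k ih1 ih2 =>
      rw [Saux_add_two]
      have e1 : (((k:ℝ)+2)+1)*θ = (((k:ℝ)+1)+1)*θ + θ := by ring
      have e2 : ((k:ℝ)+1)*θ = (((k:ℝ)+1)+1)*θ - θ := by ring
      push_cast
      rw [e1, Real.sin_add]
      rw [e2, Real.sin_sub] at ih1
      push_cast at ih2
      linear_combination 2*Real.cos θ * ih2 - ih1

lemma abs_sin_nat_mul (k : ℕ) (θ : ℝ) : |Real.sin ((k:ℝ)*θ)| ≤ k * |Real.sin θ| := by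
  induction k with
  | zero => simp
  | succ k ih =>
      have e : ((k:ℝ)+1)*θ = (k:ℝ)*θ + θ := by ring
      push_cast
      rw [e, Real.sin_add]
      calc |Real.sin ((k:ℝ)*θ) * Real.cos θ + Real.cos ((k:ℝ)*θ) * Real.sin θ|
          ≤ |Real.sin ((k:ℝ)*θ) * Real.cos θ| + |Real.cos ((k:ℝ)*θ) * Real.sin θ| := abs_add_le _ _
        _ ≤ |Real.sin ((k:ℝ)*θ)| * 1 + 1 * |Real.sin θ| := by
              rw [abs_mul, abs_mul]
              gcongr <;> [exact Real.abs_cos_le_one θ; exact Real.abs_cos_le_one _]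
        _ ≤ (k:ℝ) * |Real.sin θ| + 1 * |Real.sin θ| := by simpa using ih
        _ = ((k:ℝ)+1) * |Real.sin θ| := by ring

lemma saux_two (k : ℕ) : Saux k (2:ℝ) = k+1 := by
  induction k using Nat.twoStepInduction with
  | zero => norm_num [Saux]
  | one => norm_num [Saux]
  | more k ih1 ih2 =>
      rw [Saux_add_two, ih1, ih2]
      push_cast
      ring

lemma saux_neg_two (k : ℕ) : Saux k (-2:ℝ) = (-1)^k * (k+1) := by
  induction k using Nat.twoStepInduction with
  | zero => norm_num [Saux]
  | one => norm_num [Saux]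
  | more k ih1 ih2 =>
      rw [Saux_add_two, ih1, ih2]
      push_cast
      ring

lemma saux_abs_le (k : ℕ) (z : ℝ) (hz : |z| ≤ 2) : |Saux k z| ≤ k+1 := by
  rcases lt_or_eq_of_le hz with hz' | hz'
  · set θ := Real.arccos (z/2) with hθ
    have hb1 : -1 ≤ z/2 := by rw [abs_lt] at hz'; linarith
    have hb2 : z/2 ≤ 1 := by rw [abs_lt] at hz'; linarith
    have hcos : Real.cos θ = z/2 := Real.cos_arccos hb1 hb2
    have hzc : z = 2*Real.cos θ := by rw [hcos]; ring
    have hsin : Real.sin θ = Real.sqrt (1 - (z/2)^2) := by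
      rw [hθ, Real.sin_arccos]
    have hsinpos : 0 < Real.sin θ := by
      rw [hsin]
      apply Real.sqrt_pos.2
      nlinarith [abs_lt.1 hz']
    have h := saux_cos θ k
    rw [← hzc] at h
    have habs : |Saux k z| * Real.sin θ = |Real.sin (((k:ℝ)+1)*θ)| := by
      rw [← abs_of_pos hsinpos, ← abs_mul, h]
    have hle : |Real.sin (((k:ℝ)+1)*θ)| ≤ ((k:ℝ)+1) * Real.sin θ := by
      have := abs_sin_nat_mul (k+1) θ
      push_cast at this
      rwa [abs_of_pos hsinpos] at this
    have hfin : |Saux k z| * Real.sin θ ≤ ((k:ℝ)+1) * Real.sin θ := by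
      rw [habs]; exact hle
    exact (mul_le_mul_iff_of_pos_right hsinpos).1 hfin
  · rcases (abs_eq (by norm_num : (0:ℝ) ≤ 2)).1 hz' with h | h
    · rw [h, saux_two, abs_of_nonneg (by positivity : (0:ℝ) ≤ (k:ℝ)+1)]
    · rw [h, saux_neg_two, abs_mul, abs_pow, abs_neg, abs_one, one_pow, one_mul,
        abs_of_nonneg (by positivity : (0:ℝ) ≤ (k:ℝ)+1)]

lemma saux_neg_big (z : ℝ) (hz : z ≤ -2) (k : ℕ) :
    ((k:ℝ)+1) ≤ (-1)^k * Saux k z ∧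
    (-1)^k * Saux k z + 1 ≤ (-1)^(k+1) * Saux (k+1) z := by
  induction k with
  | zero =>
      constructor
      · norm_num [Saux]
      · show (-1:ℝ)^0 * Saux 0 z + 1 ≤ (-1)^1 * Saux 1 z
        show (-1:ℝ)^0 * 1 + 1 ≤ (-1)^1 * z
        norm_num; linarith
  | succ k ih =>
      obtain ⟨h1, h2⟩ := ih
      constructor
      · push_cast; linarith
      · have e : k + 1 + 1 = k + 2 := rfl
        rw [e, Saux_add_two]
        have hp : (-1:ℝ)^(k+2) = (-1)^k := by rw [pow_succ, pow_succ]; ring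
        rw [hp, pow_succ] at *
        nlinarith [h1, h2]

lemma S_coe (k : ℕ) (z : ℝ) : S (k : ℤ) z = Saux k z := by
  simp [S]

lemma S_neg_one (z : ℝ) : S (-1 : ℤ) z = 0 := by
  simp [S]

lemma S_negidx (k : ℕ) (z : ℝ) : S (-(k:ℤ)-2) z = -Saux k z := by
  have h1 : ¬ (0 ≤ -(k:ℤ)-2) := by omega
  have h2 : (-(k:ℤ)-2) ≠ -1 := by omega
  simp only [S, if_neg h1, if_neg h2]
  have e : -(-(k:ℤ)-2) - 2 = (k:ℤ) := by ring
  rw [e, Int.toNat_natCast]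

lemma S_pair (n : ℤ) (hn : n ≠ 0) (z : ℝ) :
    (S (n-1) z)^2 + (S (n-2) z)^2 - z * (S (n-1) z) * (S (n-2) z) = 1 ∧
    (|z| ≤ 2 → (S (n-1) z)^2 ≤ (n:ℝ)^2) := by
  rcases lt_trichotomy n 0 with h | h | h
  · obtain ⟨N, rfl⟩ : ∃ N : ℕ, n = -((N:ℤ)+1) := ⟨(-n-1).toNat, by omega⟩
    have e1 : -((N:ℤ)+1) - 1 = -((N:ℕ):ℤ) - 2 := by ring
    have e2 : -((N:ℤ)+1) - 2 = -(((N+1:ℕ)):ℤ) - 2 := by push_cast; ring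
    rw [e1, e2, S_negidx, S_negidx]
    constructor
    · linear_combination saux_identity N z
    · intro hz
      have hb := saux_abs_le N z hz
      have h1 : (-Saux N z)^2 ≤ ((N:ℝ)+1)^2 := by
        rw [neg_pow]
        nlinarith [abs_nonneg (Saux N z), sq_abs (Saux N z)]
      have h2 : ((N:ℝ)+1)^2 = ((-((N:ℤ)+1) : ℤ):ℝ)^2 := by push_cast; ring
      linarith [h1, h2.le, h2.ge]
  · exact absurd h hn
  · rcases eq_or_lt_of_le (by omega : (1:ℤ) ≤ n) with h1 | h1
    · obtain rfl : n = 1 := h1.symm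
      have e0 : S ((1:ℤ)-1) z = 1 := by norm_num [S, Saux]
      have e1 : S ((1:ℤ)-2) z = 0 := by norm_num [S]
      rw [e0, e1]
      norm_num
    · obtain ⟨j, rfl⟩ : ∃ j : ℕ, n = (j:ℤ)+2 := ⟨(n-2).toNat, by omega⟩
      have e1 : ((j:ℤ)+2) - 1 = (((j+1:ℕ)):ℤ) := by push_cast; ring
      have e2 : ((j:ℤ)+2) - 2 = ((j:ℕ):ℤ) := by push_cast; ring
      rw [e1, e2, S_coe, S_coe]
      constructor
      · exact saux_identity j z
      · intro hz
        have ha := saux_abs_le (j+1) z hz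
        push_cast at ha
        have h1 : (Saux (j+1) z)^2 ≤ ((j:ℝ)+2)^2 := by
          nlinarith [abs_nonneg (Saux (j+1) z), sq_abs (Saux (j+1) z)]
        have h2 : ((j:ℝ)+2)^2 = (((j:ℤ)+2 : ℤ):ℝ)^2 := by push_cast; ring
        linarith [h1, h2.le]

/-- Endgame for the case `y ≤ -2`. -/
lemma endgame_neg (A2 c2 p w : ℝ) (hkey : A2 * (w * c2 * (1 + w*p)) = 1)
    (hA2 : 0 ≤ A2) (hc2 : 0 ≤ c2) (hw : w < 0) (hp : p < 0) : False := by
  have h1 : 0 < 1 + w*p := by nlinarith [mul_pos_of_neg_of_neg hw hp]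
  have h2 : w * c2 * (1 + w*p) ≤ 0 := by nlinarith [mul_nonneg hc2 h1.le]
  nlinarith [mul_nonneg hA2 (neg_nonneg.2 h2)]

set_option maxHeartbeats 1000000 in
/-- Endgame for the case `-2 < y ≤ 2`. -/
lemma endgame_main (A2 c2 p w q e D Kr n2 : ℝ)
    (hkey : A2 * (w * c2 * (1 + w*p)) = 1)
    (hc2 : c2 = 1 - q*p)
    (hc2nn : 0 ≤ c2)
    (hA2nn : 0 ≤ A2)
    (himp : 0 ≤ w*c2 → w*c2 ≤ 4 → A2 ≤ n2)
    (habs : |p| ≤ Kr/4)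
    (hw : w = e - q)
    (hq0 : 0 ≤ q) (he0 : 0 ≤ e) (heD : e*D < 4)
    (hD4 : (4:ℝ) ≤ D) (hKr8 : (8:ℝ) ≤ Kr) (hn2 : (1:ℝ) ≤ n2)
    (hDsq : D^2 = 4*n2*(D+Kr)) : False := by
  have hD0 : (0:ℝ) < D := by linarith
  rcases lt_trichotomy w 0 with hw0 | hw0 | hw0
  · -- w < 0
    have h1wp : 1 + w*p < 0 := by
      by_contra hcon
      push_neg at hcon
      have t1 : 0 ≤ c2 * (1 + w*p) := mul_nonneg hc2nn hcon
      have t2 : w * (c2 * (1 + w*p)) ≤ 0 := by nlinarith [t1, hw0]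
      nlinarith [mul_nonneg hA2nn (neg_nonneg.2 t2)]
    have hp0 : 0 < p := by
      by_contra hcon
      push_neg at hcon
      have : 0 ≤ w*p := by
        have t := mul_nonneg (neg_nonneg.2 hw0.le) (neg_nonneg.2 hcon)
        rw [neg_mul_neg] at t
        exact t
      linarith
    have hqp : 1 < q*p := by
      have t1 : 0 ≤ e*p := mul_nonneg he0 hp0.le
      nlinarith [h1wp, t1]
    linarith [hc2nn, hc2, hqp]
  · -- w = 0
    rw [hw0] at hkey
    norm_num at hkey
  · -- w > 0
    have hqe : q < e := by linarith [hw0]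
    have hqD : q*D < 4 := by nlinarith [heD, mul_lt_mul_of_pos_right hqe hD0]
    have hwD : w*D < 4 := by nlinarith [heD, mul_le_mul_of_nonneg_right (show w ≤ e by linarith) hD0.le]
    have hfacpos : 0 < c2 * (1 + w*p) := by
      by_contra hcon
      push_neg at hcon
      nlinarith [hA2nn, hw0, hcon, mul_nonneg hA2nn (mul_nonneg hw0.le (neg_nonneg.2 hcon))]
    have hc2pos : 0 < c2 := by
      rcases hc2nn.lt_or_eq with h | h
      · exact h
      · exfalso; rw [← h] at hfacpos; simp at hfacpos
    have h1wp : 0 < 1 + w*p := by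
      by_contra hcon
      push_neg at hcon
      nlinarith [hfacpos, mul_nonneg hc2pos.le (neg_nonneg.2 hcon)]
    have hnp2 : |p| ≤ Kr/4 := habs
    -- bound w*c2 ≤ 4
    have hwc24 : w*c2 ≤ 4 := by
      rcases le_or_gt 0 p with hp | hp
      · have hc2le1 : c2 ≤ 1 := by nlinarith [mul_nonneg hq0 hp]
        have hw1 : w ≤ 1 := by nlinarith [hwD, hD4, hw0]
        nlinarith [hw0, hc2le1, hw1]
      · have hnp : 0 < -p := by linarith
        have hnpK : -p ≤ Kr/4 := le_trans (neg_le_abs _) habs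
        have e1 : w*c2*D^2 = (w*D)*(D + (q*D)*(-p)) := by rw [hc2]; ring
        have hb1 : D + (q*D)*(-p) ≤ D + Kr := by
          have t1 : (q*D)*(-p) ≤ 4*(-p) := mul_le_mul_of_nonneg_right hqD.le hnp.le
          linarith [hnpK]
        have hbpos : 0 < D + (q*D)*(-p) := by
          nlinarith [hD0, mul_nonneg (mul_nonneg hq0 hD0.le) hnp.le]
        have hX : (w*D)*(D + (q*D)*(-p)) < 4*(D+Kr) := by
          calc (w*D)*(D + (q*D)*(-p)) < 4*(D + (q*D)*(-p)) :=
                mul_lt_mul_of_pos_right hwD hbpos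
            _ ≤ 4*(D+Kr) := by linarith
        have h2 : 4*(D+Kr) ≤ D^2 := by nlinarith [hDsq, hn2, hD0, hKr8]
        by_contra hcon
        push_neg at hcon
        nlinarith [e1, hX, h2, mul_pos hD0 hD0, hcon]
    have hA2le : A2 ≤ n2 := himp (mul_nonneg hw0.le hc2nn) hwc24
    have hn2pos : (0:ℝ) < n2 := by linarith
    have hfacpos' : 0 < w * c2 * (1 + w*p) := mul_pos (mul_pos hw0 hc2pos) h1wp
    have hle1 : 1 ≤ n2 * (w * c2 * (1 + w*p)) := by
      calc 1 = A2 * (w * c2 * (1 + w*p)) := hkey.symm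
        _ ≤ n2 * (w * c2 * (1 + w*p)) := mul_le_mul_of_nonneg_right hA2le hfacpos'.le
    have hlt1 : n2 * (w * c2 * (1 + w*p)) < 1 := by
      rcases le_or_gt 0 p with hp | hp
      · have hpK : p ≤ Kr/4 := le_trans (le_abs_self _) habs
        have hc2le1 : c2 ≤ 1 := by nlinarith [mul_nonneg hq0 hp]
        have t0 : w * c2 * (1 + w*p) ≤ w*(1 + w*p) := by
          nlinarith [hc2le1, mul_pos hw0 h1wp]
        have te : n2 * (w*(1 + w*p)) * D^2 = n2 * ((w*D)*(D + (w*D)*p)) := by ring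
        have hu0 : 0 < w*D := mul_pos hw0 hD0
        have hupK : (w*D)*p ≤ Kr := by
          have t1 : (w*D)*p ≤ 4*p := mul_le_mul_of_nonneg_right hwD.le hp
          linarith [hpK]
        have hbpos2 : 0 < D + (w*D)*p := by
          nlinarith [hD0, mul_nonneg hu0.le hp]
        have hX : (w*D)*(D + (w*D)*p) < 4*(D+Kr) := by
          calc (w*D)*(D + (w*D)*p) < 4*(D + (w*D)*p) :=
                mul_lt_mul_of_pos_right hwD hbpos2
            _ ≤ 4*(D+Kr) := by linarith
        have h4 : n2*(4*(D+Kr)) = D^2 := by linear_combination hDsq.symm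
        have h5 : n2 * (w*(1 + w*p)) * D^2 < 1 * D^2 := by
          rw [te, one_mul]
          calc n2 * ((w*D)*(D + (w*D)*p)) < n2*(4*(D+Kr)) :=
                mul_lt_mul_of_pos_left hX hn2pos
            _ = D^2 := h4
        have h6 : n2 * (w*(1 + w*p)) < 1 := by
          have := lt_of_mul_lt_mul_right h5 (sq_nonneg D)
          linarith
        nlinarith [t0, hn2pos, h6]
      · have hnp : 0 < -p := by linarith
        have hnpK : -p ≤ Kr/4 := le_trans (neg_le_abs _) habs
        have t0 : w * c2 * (1 + w*p) ≤ w*c2 := by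
          nlinarith [mul_pos hw0 hc2pos, mul_pos hw0 hnp]
        have te : n2 * (w*c2) * D^2 = n2 * ((w*D)*(D + (q*D)*(-p))) := by
          rw [hc2]; ring
        have hb1 : D + (q*D)*(-p) ≤ D + Kr := by
          have t1 : (q*D)*(-p) ≤ 4*(-p) := mul_le_mul_of_nonneg_right hqD.le hnp.le
          linarith [hnpK]
        have hbpos2 : 0 < D + (q*D)*(-p) := by
          nlinarith [hD0, mul_nonneg (mul_nonneg hq0 hD0.le) hnp.le]
        have hX : (w*D)*(D + (q*D)*(-p)) < 4*(D+Kr) := by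
          calc (w*D)*(D + (q*D)*(-p)) < 4*(D + (q*D)*(-p)) :=
                mul_lt_mul_of_pos_right hwD hbpos2
            _ ≤ 4*(D+Kr) := by linarith
        have h4 : n2*(4*(D+Kr)) = D^2 := by linear_combination hDsq.symm
        have h5 : n2 * (w*c2) * D^2 < 1 * D^2 := by
          rw [te, one_mul]
          calc n2 * ((w*D)*(D + (q*D)*(-p))) < n2*(4*(D+Kr)) :=
                mul_lt_mul_of_pos_left hX hn2pos
            _ = D^2 := h4
        have h6 : n2 * (w*c2) < 1 := by
          have := lt_of_mul_lt_mul_right h5 (sq_nonneg D)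
          linarith
        nlinarith [t0, hn2pos, h6]
    linarith [hle1, hlt1]

set_option maxHeartbeats 1000000 in
theorem stmt13 (m : ℕ) (hm : 0 < m) (n : ℤ) (hn : n ≠ 0) (x y lam alp : ℝ)
    (hlam : lam = x ^ 2 - y - (y - 2) * (y + 2 - x ^ 2) * S (m : ℤ) y * S ((m : ℤ) - 1) y)
    (halp : alp = 1 + (y + 2 - x ^ 2) * S ((m : ℤ) - 1) y * (S (m : ℤ) y - S ((m : ℤ) - 1) y))
    (hx2 : |x| ≤ 2)
    (hroot : S (n - 1) lam * alp - S (n - 2) lam = 0)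
    (hx : 2 * Real.sqrt (1 - 1 / (2 * (n : ℝ) ^ 2 +
      2 * |(n : ℝ)| * Real.sqrt (4 * (m : ℝ) * ((m : ℝ) + 1) + (n : ℝ) ^ 2))) < |x|) :
    2 < y := by
  by_contra hy2'
  push_neg at hy2'
  obtain ⟨k, rfl⟩ : ∃ k, m = k + 1 := ⟨m-1, (Nat.succ_pred_eq_of_pos hm).symm⟩
  have em1 : ((k+1:ℕ):ℤ) - 1 = ((k:ℕ):ℤ) := by push_cast; ring
  rw [em1, S_coe, S_coe] at hlam halp
  have hidy : Saux (k+1) y ^ 2 + Saux k y ^ 2 - y * Saux (k+1) y * Saux k y = 1 :=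
    saux_identity k y
  set a := Saux (k+1) y with haeq
  set b := Saux k y with hbeq
  -- numeric setup
  set Kr : ℝ := 4 * ((k+1 : ℕ) : ℝ) * (((k+1 : ℕ) : ℝ) + 1) with hKr
  set s : ℝ := Real.sqrt (Kr + (n:ℝ)^2) with hseq
  set D : ℝ := 2 * (n:ℝ)^2 + 2 * |(n:ℝ)| * s with hDeq
  have hKr8 : (8:ℝ) ≤ Kr := by
    rw [hKr]; push_cast; nlinarith [Nat.cast_nonneg (α := ℝ) k]
  have hn1 : (1:ℝ) ≤ |(n:ℝ)| := by
    rw [← Int.cast_abs]; exact_mod_cast Int.one_le_abs hn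
  have hn2 : (1:ℝ) ≤ (n:ℝ)^2 := by nlinarith [hn1, sq_abs (n:ℝ)]
  have hs0 : 0 ≤ s := Real.sqrt_nonneg _
  have hs2 : s^2 = Kr + (n:ℝ)^2 := Real.sq_sqrt (by nlinarith)
  have hs1 : (1:ℝ) ≤ s := by nlinarith [hs2, hs0]
  have hD4 : (4:ℝ) ≤ D := by rw [hDeq]; nlinarith [hn2, hn1, hs1]
  have hD0 : (0:ℝ) < D := by linarith
  have hDsq : D^2 = 4*(n:ℝ)^2*(D + Kr) := by
    rw [hDeq]
    linear_combination (4*s^2) * (sq_abs (n:ℝ)) + 4*(n:ℝ)^2 * hs2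
  have harg : 0 ≤ 1 - 1/D := by
    have : 1/D ≤ 1 := by rw [div_le_one hD0]; linarith
    linarith
  have hxx : 4*(1-1/D) < x^2 := by
    have h0 : 0 ≤ 2*Real.sqrt (1-1/D) := by positivity
    have hsq : (2*Real.sqrt (1-1/D))^2 = 4*(1-1/D) := by
      rw [mul_pow, Real.sq_sqrt harg]; ring
    nlinarith [hx, h0, sq_abs x]
  have heps : (4 - x^2)*D < 4 := by
    have h1 : 4 - x^2 < 4*(1/D) := by
      have : 4*(1/D) = 4 - 4*(1-1/D) := by ring
      linarith [hxx]
    calc (4-x^2)*D < 4*(1/D)*D := mul_lt_mul_of_pos_right h1 hD0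
      _ = 4 := by field_simp
  have hx0 : (0:ℝ) < x^2 := by
    have h14 : 1/D ≤ 1/4 := by
      rw [div_le_div_iff₀ hD0 (by norm_num)]; linarith
    linarith [hxx]
  have hx4 : x^2 ≤ 4 := by nlinarith [abs_le.1 hx2, sq_abs x]
  -- algebraic identities
  obtain ⟨hAB, hA2cond⟩ := S_pair n hn lam
  have hlam2 : lam = 2 - (y+2-x^2)*(a-b)^2 := by
    rw [hlam]; linear_combination (y+2-x^2) * hidy
  have hfactor : 1 + alp^2 - lam*alp =
      (y+2-x^2) * (a-b)^2 * (1 + (y+2-x^2)*(a*b)) := by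
    rw [halp, hlam2]; ring
  have hkey : (S (n-1) lam)^2 *
      ((y+2-x^2) * (a-b)^2 * (1 + (y+2-x^2)*(a*b))) = 1 := by
    rw [← hfactor]
    linear_combination hAB +
      (S (n-1) lam * alp + S (n-2) lam - lam * S (n-1) lam) * hroot
  have hc2 : (a-b)^2 = 1 - (2-y)*(a*b) := by linear_combination hidy
  -- abstract the heavy polynomial atoms
  obtain ⟨A2, hA2def⟩ : ∃ A2, (S (n-1) lam)^2 = A2 := ⟨_, rfl⟩
  obtain ⟨c2, hc2def⟩ : ∃ c2, (a-b)^2 = c2 := ⟨_, rfl⟩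
  obtain ⟨p, hpdef⟩ : ∃ p, a*b = p := ⟨_, rfl⟩
  rw [hA2def, hc2def, hpdef] at hkey
  rw [hc2def, hpdef] at hc2
  rw [hc2def] at hlam2
  have hA2nn : 0 ≤ A2 := by rw [← hA2def]; exact sq_nonneg _
  have hc2nn : 0 ≤ c2 := by rw [← hc2def]; exact sq_nonneg _
  have himp : 0 ≤ (y+2-x^2)*c2 → (y+2-x^2)*c2 ≤ 4 → A2 ≤ (n:ℝ)^2 := by
    intro h1 h2
    rw [← hA2def]
    apply hA2cond
    rw [abs_le]
    constructor
    · rw [hlam2]; linarith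
    · rw [hlam2]; linarith
  clear hfactor hAB hroot hlam halp hidy hA2cond hlam2 hA2def hc2def hx
  rcases le_or_gt y (-2) with hyneg | hyneg
  · -- y ≤ -2
    obtain ⟨h1, h2⟩ := saux_neg_big y hyneg k
    rw [← hbeq] at h1
    rw [← haeq, ← hbeq] at h2
    have hsq1 : ((-1:ℝ)^k)^2 = 1 := by
      rw [← pow_mul, mul_comm, pow_mul]; norm_num
    have hbpos : (0:ℝ) < (-1)^k * b :=
      lt_of_lt_of_le (by positivity) h1
    have hapos : (0:ℝ) < (-1)^(k+1) * a := by linarith [h1, h2]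
    have hsign : ((-1:ℝ)^k * b) * ((-1)^(k+1) * a) = -(a*b) := by
      rw [pow_succ]
      linear_combination (-(a*b)) * hsq1
    have hprod : p < 0 := by
      rw [← hpdef]
      have t := mul_pos hbpos hapos
      rw [hsign] at t
      linarith
    have hw : y + 2 - x^2 < 0 := by linarith
    exact endgame_neg A2 c2 p (y+2-x^2) hkey hA2nn hc2nn hw hprod
  · -- -2 < y ≤ 2
    have hyabs : |y| ≤ 2 := abs_le.2 ⟨by linarith, hy2'⟩
    have ha := saux_abs_le (k+1) y hyabs
    have hb := saux_abs_le k y hyabs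
    rw [← haeq] at ha
    rw [← hbeq] at hb
    push_cast at ha hb
    have hab : |p| ≤ Kr/4 := by
      rw [← hpdef, abs_mul, hKr]
      push_cast
      nlinarith [mul_le_mul ha hb (abs_nonneg b) (by positivity : (0:ℝ) ≤ (k:ℝ)+1+1),
        abs_nonneg a, abs_nonneg b]
    exact endgame_main A2 c2 p (y+2-x^2) (2-y) (4-x^2) D Kr ((n:ℝ)^2)
      hkey hc2 hc2nn hA2nn himp hab
      (by ring) (by linarith) (by linarith) heps hD4 hKr8 hn2 hDsq
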